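/- For any two density matrices ρ₁, ρ₂, the sub-fidelity is a lower bound for fidelity: tr(ρ₁ρ₂) + √(2[(tr ρ₁ρ₂)² − tr(ρ₁ρ₂ρ₁ρ₂)]) ≤ (tr√(√ρ₁ ρ₂ √ρ₁))². -/

import Mathlib

open Matrix ComplexOrder

attribute [local instance] Classical.propDecidable

/-- Fidelity `F(ρ₁,ρ₂) = (tr √(√ρ₁ ρ₂ √ρ₁))²` (0 when not defined). -/
noncomputable def fid {n : Type*} [Fintype n] [DecidableEq n] (ρ₁ ρ₂ : Matrix n n ℂ) : ℝ :=
  if h1 : ρ₁.PosSemidef then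
    if h2 : (((h1.1.eigenvectorUnitary : Matrix n n ℂ) * diagonal ((RCLike.ofReal : ℝ → ℂ) ∘ Real.sqrt ∘ h1.1.eigenvalues) *
        (star h1.1.eigenvectorUnitary : Matrix n n ℂ)) * ρ₂ *
        ((h1.1.eigenvectorUnitary : Matrix n n ℂ) * diagonal ((RCLike.ofReal : ℝ → ℂ) ∘ Real.sqrt ∘ h1.1.eigenvalues) *
        (star h1.1.eigenvectorUnitary : Matrix n n ℂ))).PosSemidef then
      (((h2.1.eigenvectorUnitary : Matrix n n ℂ) * diagonal ((RCLike.ofReal : ℝ → ℂ) ∘ Real.sqrt ∘ h2.1.eigenvalues) *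
        (star h2.1.eigenvectorUnitary : Matrix n n ℂ)).trace).re ^ 2 else 0
  else 0

/-- Square root of a PSD matrix (as in the old Mathlib `PosSemidef.sqrt`). -/
noncomputable def psdSqrt {n : Type*} [Fintype n] [DecidableEq n] {A : Matrix n n ℂ}
    (hA : A.PosSemidef) : Matrix n n ℂ :=
  (hA.1.eigenvectorUnitary : Matrix n n ℂ) * diagonal ((RCLike.ofReal : ℝ → ℂ) ∘ Real.sqrt ∘ hA.1.eigenvalues) *
    (star hA.1.eigenvectorUnitary : Matrix n n ℂ)

lemma psdSqrt_posSemidef {n : Type*} [Fintype n] [DecidableEq n] {A : Matrix n n ℂ}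
    (hA : A.PosSemidef) : (psdSqrt hA).PosSemidef := by
  have hD : (diagonal ((RCLike.ofReal : ℝ → ℂ) ∘ Real.sqrt ∘ hA.1.eigenvalues)).PosSemidef :=
    posSemidef_diagonal_iff.mpr fun i => Complex.zero_le_real.mpr (Real.sqrt_nonneg _)
  exact hD.mul_mul_conjTranspose_same (hA.1.eigenvectorUnitary : Matrix n n ℂ)

lemma psdSqrt_mul_self {n : Type*} [Fintype n] [DecidableEq n] {A : Matrix n n ℂ}
    (hA : A.PosSemidef) : psdSqrt hA * psdSqrt hA = A := by
  set C : Matrix n n ℂ := (hA.1.eigenvectorUnitary : Matrix n n ℂ) with hC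
  set E := diagonal ((RCLike.ofReal : ℝ → ℂ) ∘ Real.sqrt ∘ hA.1.eigenvalues) with hE
  have hdef : psdSqrt hA = C * E * star C := rfl
  have hCC : star C * C = 1 := Matrix.mem_unitaryGroup_iff'.mp hA.1.eigenvectorUnitary.2
  have hEE : E * E = diagonal ((RCLike.ofReal : ℝ → ℂ) ∘ hA.1.eigenvalues) := by
    rw [hE, diagonal_mul_diagonal]
    congr 1
    funext v
    simp only [Function.comp_apply]
    rw [← RCLike.ofReal_mul, Real.mul_self_sqrt (hA.eigenvalues_nonneg v)]
  calc psdSqrt hA * psdSqrt hA = C * E * (star C * C) * E * star C := by rw [hdef]; noncomm_ring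
    _ = C * (E * E) * star C := by rw [hCC]; noncomm_ring
    _ = A := by rw [hEE]; exact hA.1.spectral_theorem.symm

/-- Trace of a power of a Hermitian matrix is the sum of powers of eigenvalues. -/
lemma trace_pow_eq_sum_eigenvalues {n : Type*} [Fintype n] [DecidableEq n]
    {B : Matrix n n ℂ} (hB : B.IsHermitian) (k : ℕ) :
    (B ^ k).trace = ∑ i, (hB.eigenvalues i : ℂ) ^ k := by
  set U : Matrix n n ℂ := (hB.eigenvectorUnitary : Matrix n n ℂ) with hU
  have hUU : star U * U = 1 := Matrix.mem_unitaryGroup_iff'.mp hB.eigenvectorUnitary.2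
  set D : Matrix n n ℂ := Matrix.diagonal (RCLike.ofReal ∘ hB.eigenvalues) with hD
  have key : ∀ m : ℕ, B ^ m = U * D ^ m * star U := by
    intro m
    induction m with
    | zero =>
      simp only [pow_zero, mul_one]
      have : U * star U = 1 := Matrix.mem_unitaryGroup_iff.mp hB.eigenvectorUnitary.2
      simp [this]
    | succ m ih =>
      have hBspec : B = U * D * star U := hB.spectral_theorem
      calc B ^ (m + 1) = B ^ m * B := pow_succ B m
        _ = (U * D ^ m * star U) * (U * D * star U) := by rw [ih, ← hBspec]
        _ = U * D ^ m * (star U * U) * D * star U := by noncomm_ring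
        _ = U * D ^ (m + 1) * star U := by rw [hUU]; noncomm_ring
  rw [key k, Matrix.trace_mul_cycle, hUU, one_mul]
  rw [hD, Matrix.diagonal_pow, Matrix.trace_diagonal]
  simp

/-- Key scalar inequality. -/
lemma key_ineq {n : Type*} [Fintype n] [DecidableEq n] (μ : n → ℝ) (hμ : ∀ i, 0 ≤ μ i) :
    (∑ i, μ i ^ 2) + Real.sqrt (2 * ((∑ i, μ i ^ 2) ^ 2 - ∑ i, μ i ^ 4))
      ≤ (∑ i, μ i) ^ 2 := by
  classical
  set s := (Finset.univ : Finset n).offDiag with hs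
  have hsq : ∀ g : n → ℝ, (∑ i, g i) ^ 2 = (∑ i, g i ^ 2) + ∑ p ∈ s, g p.1 * g p.2 := by
    intro g
    rw [sq, Finset.sum_mul_sum, ← Finset.sum_product', ← Finset.diag_union_offDiag,
      Finset.sum_union (Finset.disjoint_diag_offDiag _), Finset.sum_diag]
    simp [sq]
    rfl
  set P := ∑ p ∈ s, μ p.1 * μ p.2 with hP
  set Q := ∑ p ∈ s, (μ p.1 * μ p.2) ^ 2 with hQ
  have h1 : (∑ i, μ i) ^ 2 = (∑ i, μ i ^ 2) + P := hsq μ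
  have h2 : (∑ i, μ i ^ 2) ^ 2 = (∑ i, μ i ^ 4) + Q := by
    have := hsq fun i => μ i ^ 2
    simpa [← pow_mul, ← mul_pow] using this
  have hf : ∀ p ∈ s, 0 ≤ μ p.1 * μ p.2 := fun p _ => mul_nonneg (hμ _) (hμ _)
  have hPnn : 0 ≤ P := Finset.sum_nonneg hf
  -- for each p in s, 2 * (μ p.1 * μ p.2) ≤ P
  have hPp : ∀ p ∈ s, 2 * (μ p.1 * μ p.2) ≤ P := by
    intro p hp
    have hpswap : p.swap ∈ s := by
      rw [Finset.mem_offDiag] at hp ⊢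
      exact ⟨hp.2.1, hp.1, fun h => hp.2.2 h.symm⟩
    have hne : p ≠ p.swap := by
      rw [Finset.mem_offDiag] at hp
      intro h
      exact hp.2.2 (congrArg Prod.fst h)
    have hsub : ({p, p.swap} : Finset (n × n)) ⊆ s := by
      intro q hq
      rcases Finset.mem_insert.mp hq with h | h
      · exact h ▸ hp
      · exact (Finset.mem_singleton.mp h) ▸ hpswap
    have := Finset.sum_le_sum_of_subset_of_nonneg hsub (fun q hq _ => hf q hq)
    rw [Finset.sum_insert (by simpa using hne), Finset.sum_singleton] at this
    calc 2 * (μ p.1 * μ p.2) = μ p.1 * μ p.2 + μ p.swap.1 * μ p.swap.2 := by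
          simp [Prod.swap]; ring
      _ ≤ P := this
  have h2Q : 2 * Q ≤ P ^ 2 := by
    have : P ^ 2 = ∑ p ∈ s, (μ p.1 * μ p.2) * P := by rw [← Finset.sum_mul]; ring
    rw [this, hQ, Finset.mul_sum]
    apply Finset.sum_le_sum
    intro p hp
    have := mul_le_mul_of_nonneg_left (hPp p hp) (hf p hp)
    calc 2 * (μ p.1 * μ p.2) ^ 2 = (μ p.1 * μ p.2) * (2 * (μ p.1 * μ p.2)) := by ring
      _ ≤ (μ p.1 * μ p.2) * P := this
  have hsqrt : Real.sqrt (2 * ((∑ i, μ i ^ 2) ^ 2 - ∑ i, μ i ^ 4)) ≤ P := by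
    have harg : 2 * ((∑ i, μ i ^ 2) ^ 2 - ∑ i, μ i ^ 4) = 2 * Q := by rw [h2]; ring
    rw [harg]
    calc Real.sqrt (2 * Q) ≤ Real.sqrt (P ^ 2) := Real.sqrt_le_sqrt h2Q
      _ = P := Real.sqrt_sq hPnn
  linarith

/-- Main inequality for an abstract PSD matrix `A`. -/
lemma helper2 {n : Type*} [Fintype n] [DecidableEq n] {A : Matrix n n ℂ}
    (hA : A.PosSemidef) :
    (A.trace).re + Real.sqrt (2 * ((A.trace).re ^ 2 - ((A * A).trace).re))
      ≤ (((psdSqrt hA).trace).re) ^ 2 := by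
  have hq := psdSqrt_posSemidef hA
  have hBB : psdSqrt hA * psdSqrt hA = A := psdSqrt_mul_self hA
  have e1 : A.trace.re = ∑ i, hq.1.eigenvalues i ^ 2 := by
    conv_lhs => rw [← hBB, ← pow_two]
    rw [trace_pow_eq_sum_eigenvalues hq.1 2]
    have h : ∑ i, (hq.1.eigenvalues i : ℂ) ^ 2
        = ((∑ i, hq.1.eigenvalues i ^ 2 : ℝ) : ℂ) := by push_cast; rfl
    rw [h, Complex.ofReal_re]
  have e2 : ((A * A).trace).re = ∑ i, hq.1.eigenvalues i ^ 4 := by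
    conv_lhs => rw [← hBB, show psdSqrt hA * psdSqrt hA * (psdSqrt hA * psdSqrt hA) = psdSqrt hA ^ 4 from by
      rw [show (4 : ℕ) = 2 + 2 from rfl, pow_add, pow_two]]
    rw [trace_pow_eq_sum_eigenvalues hq.1 4]
    have h : ∑ i, (hq.1.eigenvalues i : ℂ) ^ 4
        = ((∑ i, hq.1.eigenvalues i ^ 4 : ℝ) : ℂ) := by push_cast; rfl
    rw [h, Complex.ofReal_re]
  have e3 : ((psdSqrt hA).trace).re = ∑ i, hq.1.eigenvalues i := by
    conv_lhs => rw [← pow_one (psdSqrt hA)]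
    rw [trace_pow_eq_sum_eigenvalues hq.1 1]
    have h : ∑ i, (hq.1.eigenvalues i : ℂ) ^ 1
        = ((∑ i, hq.1.eigenvalues i : ℝ) : ℂ) := by push_cast; simp
    rw [h, Complex.ofReal_re]
  rw [e1, e2, e3]
  exact key_ineq _ hq.eigenvalues_nonneg

theorem subFidelity_le_fidelity {N : ℕ} (ρ₁ ρ₂ : Matrix (Fin N) (Fin N) ℂ)
    (h1 : ρ₁.PosSemidef) (h2 : ρ₂.PosSemidef)
    (t1 : ρ₁.trace = 1) (t2 : ρ₂.trace = 1) :
    ((ρ₁ * ρ₂).trace).re +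
      Real.sqrt (2 * (((ρ₁ * ρ₂).trace).re ^ 2 - ((ρ₁ * ρ₂ * ρ₁ * ρ₂).trace).re))
      ≤ fid ρ₁ ρ₂ := by
  have hA : (psdSqrt h1 * ρ₂ * psdSqrt h1).PosSemidef := by
    have := h2.mul_mul_conjTranspose_same (psdSqrt h1)
    rwa [(psdSqrt_posSemidef h1).1.eq] at this
  have htr1 : (ρ₁ * ρ₂).trace = (psdSqrt h1 * ρ₂ * psdSqrt h1).trace := by
    conv_lhs => rw [← psdSqrt_mul_self h1]
    rw [Matrix.trace_mul_cycle, Matrix.trace_mul_cycle]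
  have htr2 : (ρ₁ * ρ₂ * ρ₁ * ρ₂).trace
      = ((psdSqrt h1 * ρ₂ * psdSqrt h1) * (psdSqrt h1 * ρ₂ * psdSqrt h1)).trace := by
    conv_lhs => rw [← psdSqrt_mul_self h1]
    have hre : psdSqrt h1 * psdSqrt h1 * ρ₂ * (psdSqrt h1 * psdSqrt h1) * ρ₂
        = psdSqrt h1 * (psdSqrt h1 * ρ₂ * (psdSqrt h1 * psdSqrt h1) * ρ₂) := by
      simp only [Matrix.mul_assoc]
    rw [hre, Matrix.trace_mul_comm]
    simp only [Matrix.mul_assoc]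
  rw [htr1, htr2]
  unfold fid
  rw [dif_pos h1]
  change _ ≤ (if h : (psdSqrt h1 * ρ₂ * psdSqrt h1).PosSemidef then ((psdSqrt h).trace).re ^ 2 else 0)
  rw [dif_pos hA]
  exact helper2 hA
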